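/- Let R be a finite commutative local ring of order q^n, R/J(R) of order q, J(R)^{n-1} ≠ 0. Order R as: the q^n - q^{n-1} units, then the elements of J\J^2, then J^2\J^3, …, then J^{n-1}\{0}, then 0, and let A be the q^n × q^n zero-product matrix A_{s,t} = 1 if s*t = 0, else 0. Then the rank of A (over the reals) is n+1, so 0 is an eigenvalue of A of multiplicity q^n - (n+1). -/

import Mathlib

open IsLocalRing Matrix

lemma quot_card_step {R : Type*} [CommRing R] [Finite R] [IsLocalRing R] (i : ℕ) :
    ∃ d : ℕ, Nat.card ↥(maximalIdeal R ^ i) =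
        Nat.card (ResidueField R) ^ d * Nat.card ↥(maximalIdeal R ^ (i+1)) ∧
      (maximalIdeal R ^ (i+1) < maximalIdeal R ^ i → 1 ≤ d) := by
  classical
  set M : ℕ → Submodule R R := fun j => (maximalIdeal R ^ j : Ideal R) with hM
  have hle : M (i+1) ≤ M i := Ideal.pow_le_pow_right (Nat.le_succ i)
  set N : Submodule R ↥(M i) := Submodule.comap (M i).subtype (M (i+1)) with hN
  have hcardN : Nat.card ↥N = Nat.card ↥(M (i+1)) :=
    Nat.card_congr (Submodule.comapSubtypeEquivOfLe hle).toEquiv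
  have hcards : Nat.card ↥(M i) = Nat.card ↥N * Nat.card (↥(M i) ⧸ N) :=
    Submodule.card_eq_card_quotient_mul_card N
  have htor : Module.IsTorsionBySet R (↥(M i) ⧸ N) (maximalIdeal R : Set R) := by
    rintro x ⟨a, ha⟩
    obtain ⟨y, rfl⟩ := Submodule.Quotient.mk_surjective N x
    rw [← Submodule.Quotient.mk_smul, Submodule.Quotient.mk_eq_zero]
    show (a • (y : R)) ∈ maximalIdeal R ^ (i+1)
    rw [smul_eq_mul, pow_succ']
    exact Ideal.mul_mem_mul ha y.2
  letI : Module (ResidueField R) (↥(M i) ⧸ N) := htor.module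
  haveI : Finite (ResidueField R) := Finite.of_surjective _ Ideal.Quotient.mk_surjective
  haveI : Finite (↥(M i) ⧸ N) := Finite.of_surjective _ (Submodule.Quotient.mk_surjective N)
  letI : Fintype (ResidueField R) := Fintype.ofFinite _
  letI : Fintype (↥(M i) ⧸ N) := Fintype.ofFinite _
  have hq : Nat.card (↥(M i) ⧸ N) =
      Nat.card (ResidueField R) ^ Module.finrank (ResidueField R) (↥(M i) ⧸ N) := by
    rw [Nat.card_eq_fintype_card, Nat.card_eq_fintype_card,
      Module.card_eq_pow_finrank (K := ResidueField R)]
  refine ⟨Module.finrank (ResidueField R) (↥(M i) ⧸ N), ?_, ?_⟩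
  · rw [hcards, hcardN, hq, mul_comm]
  · intro hlt
    rcases lt_iff_le_and_ne.mp hlt with ⟨-, hne⟩
    have : ∃ y : ↥(M i), ¬ ((y : R) ∈ M (i+1)) := by
      by_contra h
      push_neg at h
      exact hne (le_antisymm hle (fun z hz => by simpa using h ⟨z, hz⟩))
    obtain ⟨y, hy⟩ := this
    have hy0 : (Submodule.Quotient.mk y : ↥(M i) ⧸ N) ≠ 0 :=
      fun h => hy ((Submodule.Quotient.mk_eq_zero N).mp h)
    have : Nontrivial (↥(M i) ⧸ N) := ⟨_, _, hy0⟩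
    have := Module.finrank_pos_iff (R := ResidueField R) (M := ↥(M i) ⧸ N) |>.mpr this
    omega

lemma chain_card {R : Type*} [CommRing R] [Fintype R] [IsLocalRing R] (q n : ℕ)
    (hq2 : 2 ≤ q) (hcard : Fintype.card R = q ^ n)
    (hres' : Nat.card (ResidueField R) = q)
    (hJ' : maximalIdeal R ^ (n-1) ≠ ⊥) (hn : 0 < n) :
    maximalIdeal R ^ n = ⊥ ∧ ∀ i ≤ n, Nat.card ↥(maximalIdeal R ^ i) = q ^ (n-i) := by
  classical
  set m : Ideal R := maximalIdeal R with hm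
  obtain ⟨k₀, hk₀⟩ : IsNilpotent m := by
    have := IsArtinianRing.isNilpotent_jacobson_bot (R := R)
    rwa [IsLocalRing.jacobson_eq_maximalIdeal ⊥ bot_ne_top] at this
  have hq0 : 0 < q := by omega
  have hcard0 : Nat.card ↥(m ^ 0) = q ^ n := by
    rw [pow_zero, Ideal.one_eq_top]
    rw [Nat.card_congr (Submodule.topEquiv (R := R) (M := R)).toEquiv]
    rw [Nat.card_eq_fintype_card, hcard]
  have hstrict : ∀ i, m ^ i ≠ ⊥ → m ^ (i+1) < m ^ i := by
    intro i hne
    refine lt_of_le_of_ne (Ideal.pow_le_pow_right (Nat.le_succ i)) (fun heq => hne ?_)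
    have key : ∀ k, m ^ (i + k) = m ^ i := by
      intro k
      induction k with
      | zero => rfl
      | succ k ih => rw [← add_assoc, pow_succ, ih, ← pow_succ, heq]
    have hk0' : m ^ k₀ = ⊥ := hk₀
    have : m ^ i ≤ ⊥ := by
      rw [← key k₀, ← hk0']
      exact Ideal.pow_le_pow_right (by omega)
    exact le_bot_iff.mp this
  have claimA : ∀ i, m ^ i ≠ ⊥ → q * Nat.card ↥(m ^ (i+1)) ≤ Nat.card ↥(m ^ i) := by
    intro i hne
    obtain ⟨d, hd, hd1⟩ := quot_card_step (R := R) i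
    rw [← hm] at hd hd1
    rw [hres'] at hd
    have := hd1 (hstrict i hne)
    calc q * Nat.card ↥(m ^ (i+1)) ≤ q ^ d * Nat.card ↥(m ^ (i+1)) :=
          Nat.mul_le_mul_right _ (Nat.le_self_pow (by omega) q)
      _ = Nat.card ↥(m ^ i) := hd.symm
  have hne_of_le : ∀ i, i ≤ n - 1 → m ^ i ≠ ⊥ := by
    intro i hi hbot
    exact hJ' (le_bot_iff.mp (hbot ▸ Ideal.pow_le_pow_right (by omega)))
  have hbot : m ^ n = ⊥ := by
    by_contra hne
    have hne' : ∀ i ≤ n, m ^ i ≠ ⊥ := by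
      intro i hi hbot
      exact hne (le_bot_iff.mp (hbot ▸ Ideal.pow_le_pow_right hi))
    have chain : ∀ j, j ≤ n + 1 → q ^ j * Nat.card ↥(m ^ j) ≤ q ^ n := by
      intro j hj
      induction j with
      | zero => simpa using hcard0.le
      | succ j ih =>
        calc q ^ (j+1) * Nat.card ↥(m ^ (j+1))
            = q ^ j * (q * Nat.card ↥(m ^ (j+1))) := by ring
          _ ≤ q ^ j * Nat.card ↥(m ^ j) :=
              Nat.mul_le_mul_left _ (claimA j (hne' j (by omega)))
          _ ≤ q ^ n := ih (by omega)
    have h1 : 0 < Nat.card ↥(m ^ (n+1)) := Nat.card_pos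
    have h2 := chain (n+1) le_rfl
    have h3 : q ^ (n+1) ≤ q ^ n := le_trans (Nat.le_mul_of_pos_right _ h1) h2
    exact absurd h3 (not_le.mpr (Nat.pow_lt_pow_right (by omega) (by omega)))
  have hlb : ∀ k, k ≤ n → q ^ k ≤ Nat.card ↥(m ^ (n - k)) := by
    intro k
    induction k with
    | zero => intro _; simpa [hbot] using Nat.card_pos
    | succ k ih =>
      intro hk
      have h1 : m ^ (n - (k+1)) ≠ ⊥ := hne_of_le _ (by omega)
      have h2 := claimA _ h1
      have h3 : n - (k+1) + 1 = n - k := by omega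
      rw [h3] at h2
      calc q ^ (k+1) = q * q ^ k := by ring
        _ ≤ q * Nat.card ↥(m ^ (n - k)) := Nat.mul_le_mul_left _ (ih (by omega))
        _ ≤ Nat.card ↥(m ^ (n - (k+1))) := h2
  refine ⟨hbot, ?_⟩
  intro i
  induction i with
  | zero => intro _; simpa using hcard0
  | succ i ih =>
    intro hi
    have hprev := ih (by omega)
    obtain ⟨d, hd, hd1⟩ := quot_card_step (R := R) i
    rw [← hm] at hd hd1
    rw [hres', hprev] at hd
    have hd1' := hd1 (hstrict i (hne_of_le i (by omega)))
    have hub : Nat.card ↥(m ^ (i+1)) ≤ q ^ (n - (i+1)) := by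
      have h1 : q * Nat.card ↥(m ^ (i+1)) ≤ q ^ d * Nat.card ↥(m ^ (i+1)) :=
        Nat.mul_le_mul_right _ (Nat.le_self_pow (by omega) q)
      rw [← hd] at h1
      have h2 : q ^ (n - i) = q * q ^ (n - (i+1)) := by
        rw [← pow_succ']
        congr 1
        omega
      rw [h2] at h1
      exact Nat.le_of_mul_le_mul_left h1 hq0
    have hlb' := hlb (n - (i+1)) (by omega)
    rw [show n - (n - (i+1)) = i + 1 by omega] at hlb'
    exact le_antisymm hub hlb'

lemma span_gen {R : Type*} [CommRing R] [Fintype R] [IsLocalRing R] (q n i : ℕ)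
    (hq2 : 2 ≤ q) (hres' : Nat.card (ResidueField R) = q)
    (hbot : maximalIdeal R ^ n = ⊥)
    (hcards : ∀ j ≤ n, Nat.card ↥(maximalIdeal R ^ j) = q ^ (n-j))
    (hi : i < n) (x : R) (hx : x ∈ maximalIdeal R ^ i) (hx' : x ∉ maximalIdeal R ^ (i+1)) :
    Ideal.span {x} = maximalIdeal R ^ i := by
  classical
  set Mi : Submodule R R := (maximalIdeal R ^ i : Ideal R)
  set Mi1 : Submodule R R := (maximalIdeal R ^ (i+1) : Ideal R)
  have hle : Mi1 ≤ Mi := Ideal.pow_le_pow_right (Nat.le_succ i)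
  set N : Submodule R ↥Mi := Submodule.comap Mi.subtype Mi1 with hN
  set W := (↥Mi ⧸ N) with hW
  have htor : Module.IsTorsionBySet R W (maximalIdeal R : Set R) := by
    rintro z ⟨a, ha⟩
    obtain ⟨y, rfl⟩ := Submodule.Quotient.mk_surjective N z
    rw [← Submodule.Quotient.mk_smul, Submodule.Quotient.mk_eq_zero]
    show (a • (y : R)) ∈ maximalIdeal R ^ (i+1)
    rw [smul_eq_mul, pow_succ']
    exact Ideal.mul_mem_mul ha y.2
  letI : Module (ResidueField R) W := htor.module
  haveI : Finite (ResidueField R) := Finite.of_surjective _ Ideal.Quotient.mk_surjective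
  haveI : Finite W := Finite.of_surjective _ (Submodule.Quotient.mk_surjective N)
  letI : Fintype (ResidueField R) := Fintype.ofFinite _
  letI : Fintype W := Fintype.ofFinite _
  -- card W = q
  have hcardN : Nat.card ↥N = q ^ (n - (i+1)) := by
    rw [Nat.card_congr (Submodule.comapSubtypeEquivOfLe hle).toEquiv]
    exact hcards (i+1) (by omega)
  have hcardW : Nat.card W = q := by
    have h1 : Nat.card ↥Mi = Nat.card ↥N * Nat.card W :=
      Submodule.card_eq_card_quotient_mul_card N
    rw [hcards i (by omega), hcardN] at h1
    have h2 : q ^ (n - i) = q ^ (n - (i+1)) * q := by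
      rw [← pow_succ]; congr 1; omega
    rw [h2] at h1
    have := Nat.eq_of_mul_eq_mul_left (Nat.pos_of_ne_zero (by positivity)) h1.symm
    omega
  have hfr : Module.finrank (ResidueField R) W = 1 := by
    have h1 : Fintype.card W = Fintype.card (ResidueField R) ^
        Module.finrank (ResidueField R) W := Module.card_eq_pow_finrank
    rw [← Nat.card_eq_fintype_card, ← Nat.card_eq_fintype_card, hcardW, hres'] at h1
    have : q ^ 1 = q ^ Module.finrank (ResidueField R) W := by simpa using h1
    exact (Nat.pow_right_injective hq2 this.symm)
  haveI : FiniteDimensional (ResidueField R) W := Module.Finite.of_finite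
  set xbar : W := Submodule.Quotient.mk ⟨x, hx⟩ with hxbar
  have hxbar0 : xbar ≠ 0 := fun h => hx' ((Submodule.Quotient.mk_eq_zero N).mp h)
  have hspan : Submodule.span (ResidueField R) {xbar} = ⊤ := by
    apply Submodule.eq_top_of_finrank_eq
    rw [finrank_span_singleton hxbar0, hfr]
  -- every element of Mi is r*x plus an element of Mi1
  have hsup1 : (maximalIdeal R ^ i : Ideal R) ≤ Ideal.span {x} ⊔ maximalIdeal R ^ (i+1) := by
    intro y hy
    have : (Submodule.Quotient.mk ⟨y, hy⟩ : W) ∈ Submodule.span (ResidueField R) {xbar} := by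
      rw [hspan]; trivial
    obtain ⟨c, hc⟩ := Submodule.mem_span_singleton.mp this
    obtain ⟨r, rfl⟩ := Ideal.Quotient.mk_surjective c
    erw [htor.mk_smul] at hc
    have : (Submodule.Quotient.mk (⟨y, hy⟩ - r • ⟨x, hx⟩) : W) = 0 := by
      rw [Submodule.Quotient.mk_sub, Submodule.Quotient.mk_smul, hc, sub_self]
    have hmem : y - r * x ∈ maximalIdeal R ^ (i+1) := by
      have := (Submodule.Quotient.mk_eq_zero N).mp this
      exact this
    have hy' : y = r * x + (y - r * x) := by ring
    rw [hy']
    exact Submodule.add_mem_sup (Ideal.mem_span_singleton'.mpr ⟨r, rfl⟩) hmem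
  have hnak : ∀ k : ℕ, (maximalIdeal R ^ i : Ideal R) ≤
      Ideal.span {x} ⊔ maximalIdeal R ^ (i+1+k) := by
    intro k
    induction k with
    | zero => simpa using hsup1
    | succ k ih =>
      have hstep : maximalIdeal R ^ (i+1+k) ≤
          Ideal.span {x} ⊔ maximalIdeal R ^ (i+1+(k+1)) := by
        have h1 : maximalIdeal R ^ (i+1+k) = maximalIdeal R ^ (1+k) * maximalIdeal R ^ i := by
          rw [← pow_add]; congr 1; omega
        rw [h1]
        calc maximalIdeal R ^ (1+k) * maximalIdeal R ^ i
            ≤ maximalIdeal R ^ (1+k) * (Ideal.span {x} ⊔ maximalIdeal R ^ (i+1+k)) :=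
              Ideal.mul_mono_right ih
          _ = maximalIdeal R ^ (1+k) * Ideal.span {x} ⊔
              maximalIdeal R ^ (1+k) * maximalIdeal R ^ (i+1+k) := Ideal.mul_sup _ _ _
          _ ≤ Ideal.span {x} ⊔ maximalIdeal R ^ (i+1+(k+1)) := by
              apply sup_le_sup Ideal.mul_le_right
              rw [← pow_add]
              exact Ideal.pow_le_pow_right (by omega)
      exact le_trans ih (by
        apply sup_le le_sup_left
        exact le_trans hstep (sup_le_sup_left le_rfl _))
  have := hnak n
  have hzero : maximalIdeal R ^ (i+1+n) = ⊥ := by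
    rw [← le_bot_iff, ← hbot]
    exact Ideal.pow_le_pow_right (by omega)
  rw [hzero, sup_bot_eq] at this
  exact le_antisymm (Ideal.span_le.mpr (Set.singleton_subset_iff.mpr hx)) this

lemma ann_eq {R : Type*} [CommRing R] [Fintype R] [IsLocalRing R] (q n i : ℕ)
    (hq0 : 0 < q) (hcard : Fintype.card R = q ^ n)
    (hbot : maximalIdeal R ^ n = ⊥)
    (hcards : ∀ j ≤ n, Nat.card ↥(maximalIdeal R ^ j) = q ^ (n-j))
    (hi : i ≤ n) (x : R) (hspan : Ideal.span {x} = maximalIdeal R ^ i) :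
    ∀ y, x * y = 0 ↔ y ∈ maximalIdeal R ^ (n - i) := by
  classical
  have hx : x ∈ maximalIdeal R ^ i := hspan ▸ Ideal.subset_span rfl
  have hbw : ∀ y ∈ maximalIdeal R ^ (n - i), x * y = 0 := by
    intro y hy
    have : x * y ∈ maximalIdeal R ^ i * maximalIdeal R ^ (n-i) := Ideal.mul_mem_mul hx hy
    rw [← pow_add, show i + (n - i) = n by omega, hbot] at this
    simpa using this
  set f : R →ₗ[R] R := LinearMap.toSpanSingleton R R x with hf
  have hrange : LinearMap.range f = (maximalIdeal R ^ i : Ideal R) := by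
    rw [← LinearMap.span_singleton_eq_range]; exact hspan
  have hker : ∀ y, y ∈ LinearMap.ker f ↔ x * y = 0 := by
    intro y
    simp [hf, LinearMap.toSpanSingleton, LinearMap.mem_ker, smul_eq_mul, mul_comm]
  have hcard1 : Nat.card R = Nat.card ↥(LinearMap.ker f) * Nat.card (R ⧸ LinearMap.ker f) :=
    Submodule.card_eq_card_quotient_mul_card _
  have hcard2 : Nat.card (R ⧸ LinearMap.ker f) = q ^ (n - i) := by
    rw [Nat.card_congr (f.quotKerEquivRange).toEquiv, hrange]
    exact hcards i hi
  have hcardker : Nat.card ↥(LinearMap.ker f) = q ^ i := by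
    rw [hcard2, Nat.card_eq_fintype_card, hcard] at hcard1
    have h2 : q ^ n = q ^ i * q ^ (n - i) := by rw [← pow_add]; congr 1; omega
    rw [h2] at hcard1
    exact Nat.eq_of_mul_eq_mul_right (by positivity) hcard1.symm
  have hsub : ((maximalIdeal R ^ (n-i) : Ideal R) : Set R) ⊆ (LinearMap.ker f : Set R) := by
    intro y hy
    exact (hker y).mpr (hbw y hy)
  have heq : ((maximalIdeal R ^ (n-i) : Ideal R) : Set R) = (LinearMap.ker f : Set R) := by
    have h1 : Nat.card ↥(maximalIdeal R ^ (n-i)) = q ^ i := by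
      rw [hcards (n-i) (by omega)]; congr 1; omega
    apply Set.eq_of_subset_of_ncard_le hsub
    rw [← Nat.card_coe_set_eq, ← Nat.card_coe_set_eq]
    exact le_of_eq ((hcardker.trans h1.symm : Nat.card ↥(LinearMap.ker f) =
      Nat.card ↥(maximalIdeal R ^ (n-i))))
  intro y
  constructor
  · intro hxy
    have : y ∈ (LinearMap.ker f : Set R) := (hker y).mpr hxy
    rw [← heq] at this
    exact this
  · exact hbw y

lemma exists_valuation {R : Type*} [CommRing R] [Fintype R] [IsLocalRing R]
    (q n : ℕ) (hn : 0 < n) (hcard : Fintype.card R = q ^ n)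
    (hres : Nat.card (R ⧸ (⊥ : Ideal R).jacobson) = q)
    (hJ : ((⊥ : Ideal R).jacobson) ^ (n - 1) ≠ ⊥) :
    ∃ v : R → ℕ, (∀ x, v x ≤ n) ∧ (∀ i ≤ n, ∃ x, v x = i) ∧
      (∀ x y, x * y = 0 ↔ n ≤ v x + v y) := by
  classical
  have hm : ((⊥ : Ideal R).jacobson) = maximalIdeal R :=
    IsLocalRing.jacobson_eq_maximalIdeal ⊥ bot_ne_top
  rw [hm] at hres hJ
  have hres' : Nat.card (ResidueField R) = q := hres
  haveI : Finite (ResidueField R) := Finite.of_surjective _ Ideal.Quotient.mk_surjective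
  have hq2 : 2 ≤ q := by
    letI : Fintype (ResidueField R) := Fintype.ofFinite _
    have : 1 < Fintype.card (ResidueField R) := Fintype.one_lt_card
    rw [← hres', Nat.card_eq_fintype_card]
    omega
  obtain ⟨hbot, hcards⟩ := chain_card q n hq2 hcard hres' hJ hn
  set v : R → ℕ := fun x => Nat.findGreatest (fun i => x ∈ maximalIdeal R ^ i) n with hv
  have hvle : ∀ x, v x ≤ n := fun x => Nat.findGreatest_le n
  have hvmem : ∀ x, x ∈ maximalIdeal R ^ (v x) := by
    intro x
    have := Nat.findGreatest_spec (P := fun i => x ∈ maximalIdeal R ^ i) (m := 0) (n := n)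
      (Nat.zero_le n) (by show x ∈ maximalIdeal R ^ 0; rw [pow_zero, Ideal.one_eq_top]; trivial)
    exact this
  have hvmax : ∀ x i, i ≤ n → x ∈ maximalIdeal R ^ i → i ≤ v x := by
    intro x i hi hxi
    exact Nat.le_findGreatest hi hxi
  have hnotmem : ∀ x, v x < n → x ∉ maximalIdeal R ^ (v x + 1) := by
    intro x hlt hmem
    have := hvmax x (v x + 1) (by omega) hmem
    omega
  have hzero : ∀ x, v x = n → x = 0 := by
    intro x hx
    have := hvmem x
    rw [hx, hbot] at this
    simpa using this
  have hvn0 : v (0 : R) = n :=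
    le_antisymm (hvle 0) (hvmax 0 n le_rfl (by simp))
  have key : ∀ x y : R, x * y = 0 ↔ n ≤ v x + v y := by
    have main : ∀ x y : R, v x < n → v y < n → (x * y = 0 ↔ n ≤ v x + v y) := by
      intro x y hx hy
      have hspan := span_gen q n (v x) hq2 hres' hbot hcards hx x (hvmem x) (hnotmem x hx)
      rw [ann_eq q n (v x) (by omega) hcard hbot hcards (by omega) x hspan y]
      constructor
      · intro hmem
        have := hvmax y (n - v x) (by omega) hmem
        omega
      · intro hle
        exact Ideal.pow_le_pow_right (by omega) (hvmem y)
    intro x y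
    rcases eq_or_lt_of_le (hvle x) with hx | hx
    · have : x = 0 := hzero x hx
      subst this
      simp only [zero_mul, eq_self_iff_true, true_iff, hvn0]
      omega
    rcases eq_or_lt_of_le (hvle y) with hy | hy
    · have : y = 0 := hzero y hy
      subst this
      simp only [mul_zero, eq_self_iff_true, true_iff, hvn0]
      omega
    exact main x y hx hy
  refine ⟨v, hvle, ?_, key⟩
  intro i hi
  rcases eq_or_lt_of_le hi with hi' | hi'
  · exact ⟨0, hi' ▸ hvn0⟩
  · have hprop : ∃ x, x ∈ maximalIdeal R ^ i ∧ x ∉ maximalIdeal R ^ (i+1) := by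
      by_contra h
      push_neg at h
      have hle : maximalIdeal R ^ i ≤ maximalIdeal R ^ (i+1) := fun z hz => h z hz
      have heq : maximalIdeal R ^ i = maximalIdeal R ^ (i+1) :=
        le_antisymm hle (Ideal.pow_le_pow_right (Nat.le_succ i))
      have h1 := hcards i (by omega)
      have h2 := hcards (i+1) (by omega)
      rw [heq, h2] at h1
      have := Nat.pow_right_injective hq2 h1
      omega
    obtain ⟨x, hx1, hx2⟩ := hprop
    refine ⟨x, le_antisymm ?_ (hvmax x i (by omega) hx1)⟩
    by_contra hgt
    push_neg at hgt
    exact hx2 (Ideal.pow_le_pow_right (by omega) (hvmem x))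

theorem rank_zero_product_matrix {R : Type*} [CommRing R] [Fintype R] [DecidableEq R]
    [IsLocalRing R] (q n : ℕ) (hn : 0 < n)
    (hcard : Fintype.card R = q ^ n)
    (hres : Nat.card (R ⧸ (⊥ : Ideal R).jacobson) = q)
    (hJ : ((⊥ : Ideal R).jacobson) ^ (n - 1) ≠ ⊥) :
    let A : Matrix R R ℝ := Matrix.of fun x y => if x * y = 0 then 1 else 0
    A.rank = n + 1 ∧ A.charpoly.rootMultiplicity 0 = q ^ n - (n + 1) := by
  classical
  intro A
  obtain ⟨v, hvle, hvsurj, hkey⟩ := exists_valuation q n hn hcard hres hJ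
  have hA : ∀ x y : R, A x y = if n ≤ v x + v y then 1 else 0 := by
    intro x y
    show (if x * y = 0 then (1:ℝ) else 0) = _
    exact if_congr (hkey x y) rfl rfl
  set vf : R → Fin (n+1) := fun x => ⟨v x, by have := hvle x; omega⟩ with hvf
  set B : Matrix (Fin (n+1)) (Fin (n+1)) ℝ :=
    Matrix.of fun i j => if n ≤ (i : ℕ) + (j : ℕ) then 1 else 0 with hB
  set P : Matrix R (Fin (n+1)) ℝ := Matrix.of fun x i => if vf x = i then 1 else 0 with hP
  have hPBP : A = P * B * Pᵀ := by
    ext x y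
    rw [Matrix.mul_apply]
    have h1 : ∀ j, (P * B) x j = B (vf x) j := by
      intro j
      rw [Matrix.mul_apply]
      simp [hP, ite_mul, Finset.sum_ite_eq, Matrix.of_apply]
    simp only [h1]
    simp only [h1, Matrix.transpose_apply, hP, Matrix.of_apply, mul_ite, mul_one, mul_zero]
    rw [Finset.sum_ite_eq Finset.univ (vf y) (fun j => B (vf x) j)]
    simp only [Finset.mem_univ, if_true]
    rw [hA x y]
    rfl
  -- representatives
  have hrepex : ∀ i : Fin (n+1), ∃ x, v x = (i : ℕ) := fun i => hvsurj i (by omega)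
  choose rep hrep using hrepex
  set S : Matrix (Fin (n+1)) R ℝ := Matrix.of fun i x => if rep i = x then 1 else 0 with hS
  have hSAS : S * A * Sᵀ = B := by
    ext i j
    rw [Matrix.mul_apply]
    have h1 : ∀ y, (S * A) i y = A (rep i) y := by
      intro y
      rw [Matrix.mul_apply]
      simp [hS, ite_mul, Finset.sum_ite_eq, Matrix.of_apply]
    simp only [h1]
    simp only [h1, Matrix.transpose_apply, hS, Matrix.of_apply, mul_ite, mul_one, mul_zero]
    rw [Finset.sum_ite_eq Finset.univ (rep j) (fun y => A (rep i) y)]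
    simp only [Finset.mem_univ, if_true]
    rw [hA, hrep, hrep]
    rfl
  -- rank of B
  have hBrank : B.rank = n + 1 := by
    have hD : (B.submatrix (Fin.revPerm : Equiv.Perm (Fin (n+1))) (Equiv.refl _)).rank = B.rank :=
      Matrix.rank_submatrix B Fin.revPerm (Equiv.refl _)
    set D := B.submatrix (Fin.revPerm : Equiv.Perm (Fin (n+1))) (Equiv.refl _) with hDdef
    have hDentry : ∀ i j : Fin (n+1), D i j = if (i : ℕ) ≤ (j : ℕ) then 1 else 0 := by
      intro i j
      show B (Fin.rev i) j = _
      have : (Fin.rev i : ℕ) = n - i := by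
        rw [Fin.val_rev]
        omega
      simp only [hB, Matrix.of_apply, this]
      have hi := i.is_le
      exact if_congr (by omega) rfl rfl
    have hDut : D.BlockTriangular id := by
      intro i j hij
      rw [hDentry]
      simp only [id_eq] at hij
      rw [if_neg (by omega)]
    have hdet : D.det = 1 := by
      rw [Matrix.det_of_upperTriangular hDut]
      apply Finset.prod_eq_one
      intro i _
      rw [hDentry, if_pos le_rfl]
    have hunit : IsUnit D := by
      rw [Matrix.isUnit_iff_isUnit_det, hdet]
      exact isUnit_one
    rw [← hD, Matrix.rank_of_isUnit D hunit, Fintype.card_fin]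
  have hrank : A.rank = n + 1 := by
    apply le_antisymm
    · rw [hPBP]
      exact le_trans (Matrix.rank_mul_le_left _ _)
        (le_trans (Matrix.rank_mul_le_right _ _) hBrank.le)
    · rw [← hBrank, ← hSAS]
      exact le_trans (Matrix.rank_mul_le_left _ _) (Matrix.rank_mul_le_right _ _)
  refine ⟨hrank, ?_⟩
  -- charpoly
  have hsymA : Aᵀ = A := by
    ext x y
    show A y x = A x y
    rw [hA, hA]
    exact if_congr (by omega) rfl rfl
  set φ := A.mulVecLin with hφ
  have hker_sq : LinearMap.ker (φ * φ) = LinearMap.ker φ := by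
    have h := Matrix.ker_mulVecLin_transpose_mul_self A
    rw [hsymA] at h
    rw [Module.End.mul_eq_comp, ← Matrix.mulVecLin_mul]
    exact h
  have hker_pow : ∀ k : ℕ, LinearMap.ker (φ ^ (k+1)) = LinearMap.ker φ := by
    intro k
    induction k with
    | zero => rw [pow_one]
    | succ k ih =>
      apply le_antisymm
      · intro x hx
        rw [LinearMap.mem_ker] at hx
        have h2 : ((φ * φ) * φ ^ k) x = 0 := by
          have e : (φ * φ) * φ ^ k = φ ^ (k + 1 + 1) := by
            rw [← pow_two, ← pow_add, Nat.add_comm]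
          rw [e]
          exact hx
        have h3 : (φ ^ k) x ∈ LinearMap.ker (φ * φ) := by
          rw [LinearMap.mem_ker]
          simpa [Module.End.mul_apply] using h2
        rw [hker_sq, LinearMap.mem_ker] at h3
        have h4 : x ∈ LinearMap.ker (φ ^ (k+1)) := by
          rw [LinearMap.mem_ker, pow_succ']
          simpa [Module.End.mul_apply] using h3
        rw [ih] at h4
        exact h4
      · intro x hx
        rw [LinearMap.mem_ker] at hx ⊢
        rw [pow_succ, Module.End.mul_apply, hx, map_zero]
  have hmax : Module.End.maxGenEigenspace φ 0 = LinearMap.ker φ := by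
    ext x
    rw [Module.End.mem_maxGenEigenspace]
    simp only [zero_smul, sub_zero]
    constructor
    · rintro ⟨k, hk⟩
      cases k with
      | zero =>
        have : x = 0 := by simpa using hk
        simp [this]
      | succ k =>
        rw [← hker_pow k]
        exact LinearMap.mem_ker.mpr hk
    · intro hx
      exact ⟨1, by simpa using (LinearMap.mem_ker.mp hx)⟩
  have hch : φ.charpoly = A.charpoly := by
    rw [← LinearMap.charpoly_toMatrix φ (Pi.basisFun ℝ R)]
    congr 1
    rw [LinearMap.toMatrix_eq_toMatrix', hφ, ← Matrix.toLin'_apply', LinearMap.toMatrix'_toLin']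
  have hnull : Module.finrank ℝ (LinearMap.ker φ) = q ^ n - (n + 1) := by
    have h1 : Module.finrank ℝ (LinearMap.range φ) + Module.finrank ℝ (LinearMap.ker φ) =
        Module.finrank ℝ (R → ℝ) := LinearMap.finrank_range_add_finrank_ker φ
    have h2 : Module.finrank ℝ (R → ℝ) = q ^ n := by
      rw [Module.finrank_pi, hcard]
    have h3 : Module.finrank ℝ (LinearMap.range φ) = n + 1 := hrank
    omega
  rw [Polynomial.rootMultiplicity_eq_natTrailingDegree', ← hch,
    ← LinearMap.finrank_maxGenEigenspace_zero_eq, hmax, hnull]
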